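/- arXiv:1611.02434 — 2 statements merged into one kernel-verified Lean document; each statement's English description precedes it below -/
import Mathlib

section
/- Suppose all products of A_{-1}, A_0, A_1 are entrywise finite. Define R = Σ_{n≥1} Σ_{i_{(n)} ∈ I_{U,1,n}} A_{i_1}⋯A_{i_n} and N = Σ_{n≥0} Σ_{i_{(n)} ∈ I_n} A_{i_1}⋯A_{i_n} (with the n = 0 term equal to the identity). Then R = A_1 N and G = N A_{-1}, where G = Σ_{n≥1} Σ_{i_{(n)} ∈ I_{D,1,n}} A_{i_1}⋯A_{i_n}, all equalities holding in [0,∞]. -/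
open scoped ENNReal
open Classical

abbrev Mx := ℕ → ℕ → ℝ≥0∞

noncomputable def mprod (A B : Mx) : Mx := fun i j => ∑' k, A i k * B k j

def isPM1 (L : List ℤ) : Prop := ∀ x ∈ L, x = -1 ∨ x = 0 ∨ x = 1

/-- `I_{D,m,n}` with `n = L.length`. -/
def ID (m : ℕ) (L : List ℤ) : Prop :=
  isPM1 L ∧ (∀ k, 1 ≤ k → k ≤ L.length - 1 → -(m : ℤ) + 1 ≤ (L.take k).sum) ∧
    L.sum = -(m : ℤ)

/-- `I_n`: partial sums nonnegative and total sum `0`. -/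
def IFlat (L : List ℤ) : Prop :=
  isPM1 L ∧ (∀ k, 1 ≤ k → k ≤ L.length - 1 → 0 ≤ (L.take k).sum) ∧ L.sum = 0

/-- `I_{U,1,n}`: partial sums `≥ 1` and total sum `1`. -/
def IU (L : List ℤ) : Prop :=
  isPM1 L ∧ (∀ k, 1 ≤ k → k ≤ L.length - 1 → 1 ≤ (L.take k).sum) ∧ L.sum = 1

/-- The matrix associated with an index in `{-1,0,1}`. -/
noncomputable def pick (Am1 A0 A1 : Mx) (x : ℤ) : Mx :=
  if x = -1 then Am1 else if x = 0 then A0 else A1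

/-- Product `A_{i₁} A_{i₂} ⋯ A_{i_n}` along an index sequence. -/
noncomputable def seqProd (Am1 A0 A1 : Mx) : List ℤ → Mx
  | [] => fun i j => if i = j then 1 else 0
  | x :: L => mprod (pick Am1 A0 A1 x) (seqProd Am1 A0 A1 L)

lemma mprod_assoc (A B C : Mx) : mprod (mprod A B) C = mprod A (mprod B C) := by
  funext i j
  unfold mprod
  have h1 : ∀ k : ℕ, (∑' l, A i l * B l k) * C k j = ∑' l, A i l * (B l k * C k j) := by
    intro k; rw [← ENNReal.tsum_mul_right]; simp [mul_assoc]
  simp only [h1]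
  rw [ENNReal.tsum_comm]
  congr 1; funext l
  rw [ENNReal.tsum_mul_left]

lemma mprod_id_left (B : Mx) : mprod (fun i j => if i = j then 1 else 0) B = B := by
  funext i j
  unfold mprod
  rw [tsum_eq_single i]
  · simp
  · intro k hk; simp [Ne.symm hk]

lemma mprod_id_right (A : Mx) : mprod A (fun i j => if i = j then 1 else 0) = A := by
  funext i j
  unfold mprod
  rw [tsum_eq_single j]
  · simp
  · intro k hk; simp [hk]

lemma seqProd_append (Am1 A0 A1 : Mx) (L1 L2 : List ℤ) :
    seqProd Am1 A0 A1 (L1 ++ L2) =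
      mprod (seqProd Am1 A0 A1 L1) (seqProd Am1 A0 A1 L2) := by
  induction L1 with
  | nil => simp [seqProd, mprod_id_left]
  | cons x L ih => simp [seqProd, ih, ← mprod_assoc]

lemma IU_cons {L : List ℤ} (h : IFlat L) : IU ((1:ℤ) :: L) := by
  obtain ⟨h1, h2, h3⟩ := h
  refine ⟨?_, ?_, ?_⟩
  · intro x hx
    rcases List.mem_cons.1 hx with rfl | hx
    · tauto
    · exact h1 x hx
  · intro k hk hk'
    obtain ⟨m, rfl⟩ : ∃ m, k = m + 1 := ⟨k - 1, by omega⟩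
    simp only [List.take_succ_cons, List.sum_cons, List.length_cons] at *
    have : (0:ℤ) ≤ (L.take m).sum := by
      rcases Nat.eq_zero_or_pos m with rfl | hm
      · simp
      · rcases le_or_gt L.length m with hle | hlt
        · rw [List.take_of_length_le hle]; omega
        · exact h2 m hm (by omega)
    omega
  · simp [h3]

lemma IU_dest {L : List ℤ} (h : IU L) : ∃ L', IFlat L' ∧ L = (1:ℤ) :: L' := by
  obtain ⟨h1, h2, h3⟩ := h
  cases L with
  | nil => simp at h3
  | cons x L' =>
    have hx1 : x = 1 := by
      rcases eq_or_ne L' [] with rfl | hne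
      · simpa using h3
      · have hL : 0 < L'.length := List.length_pos_iff.2 hne
        have hh := h2 1 le_rfl (by simp only [List.length_cons]; omega)
        simp only [List.take_succ_cons, List.take_zero, List.sum_cons, List.sum_nil,
          add_zero] at hh
        have := h1 x (by simp)
        omega
    subst hx1
    have h3' : L'.sum = 0 := by
      simp only [List.sum_cons] at h3; omega
    refine ⟨L', ⟨fun y hy => h1 y (List.mem_cons_of_mem _ hy), ?_, h3'⟩, rfl⟩
    intro k hk hk'
    have hh := h2 (k+1) (by omega) (by simp only [List.length_cons]; omega)
    simp only [List.take_succ_cons, List.sum_cons] at hh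
    omega

lemma ID_snoc {L : List ℤ} (h : IFlat L) : ID 1 (L ++ [(-1:ℤ)]) := by
  obtain ⟨h1, h2, h3⟩ := h
  refine ⟨?_, ?_, ?_⟩
  · intro x hx
    rcases List.mem_append.1 hx with hx | hx
    · exact h1 x hx
    · simp at hx; tauto
  · intro k hk hk'
    have hkle : k ≤ L.length := by
      simp only [List.length_append, List.length_cons, List.length_nil] at hk'; omega
    rw [List.take_append_of_le_length hkle]
    rcases eq_or_lt_of_le hkle with heq | hlt
    · rw [heq, List.take_length]; omega
    · have := h2 k hk (by omega); omega
  · simp [h3]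

lemma ID_dest {L : List ℤ} (h : ID 1 L) : ∃ L', IFlat L' ∧ L = L' ++ [(-1:ℤ)] := by
  obtain ⟨h1, h2, h3⟩ := h
  rcases eq_or_ne L [] with rfl | hne
  · simp at h3
  obtain ⟨L', x, rfl⟩ : ∃ L' x, L = L' ++ [x] := by
    obtain ⟨t, y, hty⟩ := (List.eq_nil_or_concat L).resolve_left hne
    exact ⟨t, y, by simpa [List.concat_eq_append] using hty⟩
  have hxv := h1 x (by simp)
  have hsum : L'.sum + x = -1 := by simpa using h3
  have key : L'.sum = 0 ∧ x = -1 := by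
    rcases eq_or_ne L' [] with rfl | hne'
    · refine ⟨by simp, ?_⟩
      simp only [List.sum_nil] at hsum
      omega
    · have hpos : 1 ≤ L'.length := List.length_pos_iff.2 hne'
      have hh := h2 L'.length hpos
        (by simp only [List.length_append, List.length_cons, List.length_nil]; omega)
      rw [List.take_append_of_le_length le_rfl, List.take_length] at hh
      omega
  obtain ⟨hs0, rfl⟩ := key
  refine ⟨L', ⟨fun y hy => h1 y (by simp [hy]), ?_, hs0⟩, rfl⟩
  intro k hk hk'
  have hh := h2 k hk
    (by simp only [List.length_append, List.length_cons, List.length_nil]; omega)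
  rw [List.take_append_of_le_length (by omega)] at hh
  omega

/-- With `N = Σ_{n≥0} Σ_{i_{(n)} ∈ I_n} A_{i₁}⋯A_{i_n}` (the `n = 0` term being the
identity), `R = Σ_{n≥1} Σ_{i_{(n)} ∈ I_{U,1,n}} A_{i₁}⋯A_{i_n}` and
`G = Σ_{n≥1} Σ_{i_{(n)} ∈ I_{D,1,n}} A_{i₁}⋯A_{i_n}`, one has `R = A₁ N` and
`G = N A₋₁` in `[0,∞]`. -/
theorem stmt6 (Am1 A0 A1 : Mx)
    (hfin : ∀ L : List ℤ, isPM1 L → ∀ i j, seqProd Am1 A0 A1 L i j ≠ ⊤)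
    (N R G : Mx)
    (hN : N = fun i j => ∑' L : {L : List ℤ // IFlat L}, seqProd Am1 A0 A1 L.1 i j)
    (hR : R = fun i j => ∑' L : {L : List ℤ // IU L}, seqProd Am1 A0 A1 L.1 i j)
    (hG : G = fun i j => ∑' L : {L : List ℤ // ID 1 L}, seqProd Am1 A0 A1 L.1 i j) :
    R = mprod A1 N ∧ G = mprod N Am1 := by
  subst hN hR hG
  have hpick1 : pick Am1 A0 A1 1 = A1 := by norm_num [pick]
  have hpickm1 : pick Am1 A0 A1 (-1) = Am1 := by norm_num [pick]
  constructor
  · funext i j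
    have hbij : Function.Bijective
        (fun L : {L : List ℤ // IFlat L} =>
          (⟨(1:ℤ) :: L.1, IU_cons L.2⟩ : {L : List ℤ // IU L})) := by
      constructor
      · rintro ⟨a, ha⟩ ⟨b, hb⟩ h; simpa using h
      · rintro ⟨L, hL⟩
        obtain ⟨L', hL', rfl⟩ := IU_dest hL
        exact ⟨⟨L', hL'⟩, rfl⟩
    rw [← Equiv.tsum_eq (Equiv.ofBijective _ hbij)
      (fun L : {L : List ℤ // IU L} => seqProd Am1 A0 A1 L.1 i j)]
    simp only [Equiv.ofBijective_apply, seqProd, hpick1, mprod]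
    rw [ENNReal.tsum_comm]
    congr 1; funext k
    rw [ENNReal.tsum_mul_left]
  · funext i j
    have hbij : Function.Bijective
        (fun L : {L : List ℤ // IFlat L} =>
          (⟨L.1 ++ [(-1:ℤ)], ID_snoc L.2⟩ : {L : List ℤ // ID 1 L})) := by
      constructor
      · rintro ⟨a, ha⟩ ⟨b, hb⟩ h; simpa using h
      · rintro ⟨L, hL⟩
        obtain ⟨L', hL', rfl⟩ := ID_dest hL
        exact ⟨⟨L', hL'⟩, rfl⟩
    rw [← Equiv.tsum_eq (Equiv.ofBijective _ hbij)
      (fun L : {L : List ℤ // ID 1 L} => seqProd Am1 A0 A1 L.1 i j)]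
    have hsm : seqProd Am1 A0 A1 [(-1:ℤ)] = Am1 := by
      show mprod (pick Am1 A0 A1 (-1)) _ = Am1
      rw [hpickm1]
      exact mprod_id_right Am1
    simp only [Equiv.ofBijective_apply, seqProd_append, hsm, mprod]
    rw [ENNReal.tsum_comm]
    congr 1; funext k
    rw [ENNReal.tsum_mul_right]
end

section
/- If X* is a nonnegative solution of X = X² A_{-1} + X A_0 + A_1 and there exist γ₀ > 0 and a nonnegative nonzero vector u with uᵀ X* = γ₀ uᵀ, then uᵀ A_*(γ₀^{−1}) = uᵀ, and consequently γ* := inf_{z>0} cp(A_*(z))^{−1} ≤ cp(A_*(γ₀^{−1}))^{−1} ≤ 1. -/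
open scoped ENNReal
open Classical

noncomputable def matPow {ι : Type*} (A : ι → ι → ℝ≥0∞) : ℕ → ι → ι → ℝ≥0∞
  | 0 => fun i j => if i = j then 1 else 0
  | n + 1 => fun i j => ∑' k, A i k * matPow A n k j

def IsIrred {ι : Type*} (A : ι → ι → ℝ≥0∞) : Prop :=
  ∀ a b, ∃ n, 1 ≤ n ∧ 0 < matPow A n a b

/-- Convergence parameter: `cp(M) = sup{z ≥ 0 : Σ_k z^k M^k entrywise finite}`. -/
noncomputable def cp {ι : Type*} (A : ι → ι → ℝ≥0∞) : ℝ≥0∞ :=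
  sSup {z : ℝ≥0∞ | ∀ i j, (∑' n : ℕ, z ^ n * matPow A n i j) ≠ ⊤}

/-- `A_*(z) = z⁻¹ A₋₁ + A₀ + z A₁` for `z > 0`. -/
noncomputable def AsZ (Am1 A0 A1 : Mx) (z : ℝ) : Mx := fun i j =>
  (ENNReal.ofReal z)⁻¹ * Am1 i j + A0 i j + ENNReal.ofReal z * A1 i j

lemma vec_mprod (u : ℕ → ℝ≥0∞) (A B : Mx) (j : ℕ) :
    ∑' i, u i * mprod A B i j = ∑' k, (∑' i, u i * A i k) * B k j := by
  calc ∑' i, u i * mprod A B i j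
      = ∑' i, ∑' k, u i * A i k * B k j := by
        refine tsum_congr fun i => ?_
        simp only [mprod]
        rw [← ENNReal.tsum_mul_left]
        exact tsum_congr fun k => by ring
    _ = ∑' k, ∑' i, u i * A i k * B k j := ENNReal.tsum_comm
    _ = ∑' k, (∑' i, u i * A i k) * B k j := by
        refine tsum_congr fun k => ?_
        rw [ENNReal.tsum_mul_right]

lemma matPow_mono (c : ℝ≥0∞) (A B : Mx) (h : ∀ i j, c * A i j ≤ B i j) :
    ∀ n i j, c ^ n * matPow A n i j ≤ matPow B n i j := by
  intro n
  induction n with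
  | zero => intro i j; rw [pow_zero, one_mul]; exact le_of_eq rfl
  | succ n ih =>
    intro i j
    have e : c ^ (n + 1) * matPow A (n + 1) i j
        = ∑' k, (c * A i k) * (c ^ n * matPow A n k j) := by
      show c ^ (n + 1) * (∑' k, A i k * matPow A n k j) = _
      rw [← ENNReal.tsum_mul_left]
      exact tsum_congr fun k => by ring
    rw [e]
    exact ENNReal.tsum_le_tsum fun k => mul_le_mul' (h i k) (ih k j)

/-- If `X*` is a nonnegative (finite) solution of `X = X² A₋₁ + X A₀ + A₁` and
`uᵀ X* = γ₀ uᵀ` for some `γ₀ > 0` and nonnegative nonzero `u`, then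
`uᵀ A_*(γ₀⁻¹) = uᵀ` and consequently
`γ* = inf_{z>0} cp(A_*(z))⁻¹ ≤ cp(A_*(γ₀⁻¹))⁻¹ ≤ 1`. -/
theorem stmt14 (Am1 A0 A1 : Mx)
    (hirr : IsIrred (fun i j => Am1 i j + A0 i j + A1 i j))
    (hfin : ∀ n i j, matPow (fun i j => Am1 i j + A0 i j + A1 i j) n i j ≠ ⊤)
    (X : Mx) (hXfin : ∀ i j, X i j ≠ ⊤)
    (hXeq : ∀ i j, X i j = mprod (mprod X X) Am1 i j + mprod X A0 i j + A1 i j)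
    (γ0 : ℝ) (hγ0 : 0 < γ0)
    (u : ℕ → ℝ≥0∞) (hune : u ≠ 0) (hufin : ∀ i, u i ≠ ⊤)
    (huX : ∀ j, (∑' i, u i * X i j) = ENNReal.ofReal γ0 * u j) :
    (∀ j, (∑' i, u i * AsZ Am1 A0 A1 γ0⁻¹ i j) = u j) ∧
    (⨅ z ∈ Set.Ioi (0 : ℝ), (cp (AsZ Am1 A0 A1 z))⁻¹) ≤ (cp (AsZ Am1 A0 A1 γ0⁻¹))⁻¹ ∧
    (cp (AsZ Am1 A0 A1 γ0⁻¹))⁻¹ ≤ 1 := by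
  set g : ℝ≥0∞ := ENNReal.ofReal γ0 with hg
  have hg0 : g ≠ 0 := (ENNReal.ofReal_pos.2 hγ0).ne'
  have hgt : g ≠ ⊤ := ENNReal.ofReal_ne_top
  set M : Mx := AsZ Am1 A0 A1 γ0⁻¹ with hM
  have hMdef : ∀ i j, M i j = g * Am1 i j + A0 i j + g⁻¹ * A1 i j := by
    intro i j
    simp only [hM, AsZ, ENNReal.ofReal_inv_of_pos hγ0, inv_inv, hg]
  have hXv : ∀ (B : Mx) (j : ℕ), ∑' i, u i * mprod X B i j = g * ∑' k, u k * B k j := by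
    intro B j
    rw [vec_mprod]
    calc ∑' k, (∑' i, u i * X i k) * B k j
        = ∑' k, g * (u k * B k j) := by
          refine tsum_congr fun k => ?_
          rw [huX k]; ring
      _ = g * ∑' k, u k * B k j := ENNReal.tsum_mul_left
  have hXX : ∀ j, ∑' i, u i * mprod X X i j = g ^ 2 * u j := by
    intro j; rw [hXv X j, huX j]; ring
  have h1 : ∀ j, ∑' i, u i * mprod (mprod X X) Am1 i j
      = g ^ 2 * ∑' k, u k * Am1 k j := by
    intro j
    rw [vec_mprod]
    calc ∑' k, (∑' i, u i * mprod X X i k) * Am1 k j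
        = ∑' k, g ^ 2 * (u k * Am1 k j) := tsum_congr fun k => by rw [hXX k]; ring
      _ = _ := ENNReal.tsum_mul_left
  have key : ∀ j, g * u j
      = g ^ 2 * ∑' k, u k * Am1 k j + g * ∑' k, u k * A0 k j + ∑' k, u k * A1 k j := by
    intro j
    rw [← huX j]
    calc ∑' i, u i * X i j
        = ∑' i, (u i * mprod (mprod X X) Am1 i j + u i * mprod X A0 i j + u i * A1 i j) := by
          refine tsum_congr fun i => ?_
          rw [hXeq i j]; ring
      _ = (∑' i, u i * mprod (mprod X X) Am1 i j) + (∑' i, u i * mprod X A0 i j)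
            + ∑' i, u i * A1 i j := by
          rw [ENNReal.tsum_add, ENNReal.tsum_add]
      _ = _ := by rw [h1 j, hXv A0 j]
  have part1 : ∀ j, ∑' i, u i * M i j = u j := by
    intro j
    have expand : ∑' i, u i * M i j
        = g * ∑' k, u k * Am1 k j + ∑' k, u k * A0 k j + g⁻¹ * ∑' k, u k * A1 k j := by
      calc ∑' i, u i * M i j
          = ∑' i, (g * (u i * Am1 i j) + u i * A0 i j + g⁻¹ * (u i * A1 i j)) := by
            refine tsum_congr fun i => ?_; rw [hMdef i j]; ring
        _ = _ := by
            rw [ENNReal.tsum_add, ENNReal.tsum_add, ENNReal.tsum_mul_left,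
              ENNReal.tsum_mul_left]
    rw [expand]
    refine (ENNReal.mul_right_inj hg0 hgt).1 ?_
    rw [key j, mul_add, mul_add, ← mul_assoc, ← mul_assoc g g⁻¹,
      ENNReal.mul_inv_cancel hg0 hgt, one_mul]
    ring
  set S : Mx := fun i j => Am1 i j + A0 i j + A1 i j with hS
  set c : ℝ≥0∞ := min 1 (min g g⁻¹) with hc
  have hc0 : c ≠ 0 :=
    (lt_min one_pos (lt_min (pos_iff_ne_zero.2 hg0) (ENNReal.inv_pos.2 hgt))).ne'
  have hcS : ∀ i j, c * S i j ≤ M i j := by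
    intro i j
    rw [hMdef i j]
    have : c * S i j = c * Am1 i j + c * A0 i j + c * A1 i j := by
      simp only [hS]; ring
    rw [this]
    gcongr
    · exact le_trans (min_le_right _ _) (min_le_left _ _)
    · calc c * A0 i j ≤ 1 * A0 i j := by gcongr; exact min_le_left _ _
        _ = A0 i j := one_mul _
    · exact le_trans (min_le_right _ _) (min_le_right _ _)
  have powvec : ∀ (n : ℕ) (j : ℕ), ∑' k, u k * matPow M n k j = u j := by
    intro n
    induction n with
    | zero =>
      intro j
      calc ∑' k, u k * matPow M 0 k j = ∑' k, (if k = j then u j else 0) := by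
            refine tsum_congr fun k => ?_
            by_cases h : k = j <;> simp [matPow, h]
        _ = u j := tsum_ite_eq j (fun _ => u j)
    | succ n ih =>
      intro j
      calc ∑' k, u k * matPow M (n + 1) k j
          = ∑' k, u k * mprod M (matPow M n) k j := rfl
        _ = ∑' k, (∑' i, u i * M i k) * matPow M n k j := vec_mprod u M (matPow M n) j
        _ = ∑' k, u k * matPow M n k j := tsum_congr fun k => by rw [part1 k]
        _ = u j := ih j
  obtain ⟨a, ha⟩ : ∃ a, u a ≠ 0 := by
    by_contra h; push_neg at h; exact hune (funext h)
  have upos : ∀ i, u i ≠ 0 := by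
    intro i
    obtain ⟨n, hn1, hn⟩ := hirr a i
    have hMn : 0 < matPow M n a i := by
      have h2 := matPow_mono c S M hcS n a i
      have hcn : (0 : ℝ≥0∞) < c ^ n * matPow S n a i :=
        ENNReal.mul_pos (pow_ne_zero n hc0) hn.ne'
      exact lt_of_lt_of_le hcn h2
    have hle : u a * matPow M n a i ≤ ∑' k, u k * matPow M n k i := ENNReal.le_tsum a
    rw [powvec n i] at hle
    exact (lt_of_lt_of_le (ENNReal.mul_pos ha hMn.ne') hle).ne'
  have bound : ∀ n i j, matPow M n i j ≤ (u i)⁻¹ * u j := by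
    intro n i j
    have hle : u i * matPow M n i j ≤ u j := by
      rw [← powvec n j]; exact ENNReal.le_tsum i
    calc matPow M n i j = (u i)⁻¹ * (u i * matPow M n i j) := by
          rw [← mul_assoc, ENNReal.inv_mul_cancel (upos i) (hufin i), one_mul]
      _ ≤ (u i)⁻¹ * u j := mul_le_mul_right hle _
  have hcp : (1 : ℝ≥0∞) ≤ cp M := by
    refine le_of_forall_lt fun b hb => ?_
    obtain ⟨z, hbz, hz1⟩ := exists_between hb
    refine lt_of_lt_of_le hbz (le_sSup ?_)
    intro i j
    have hsum : ∑' n, z ^ n * matPow M n i j ≤ ∑' n : ℕ, z ^ n * ((u i)⁻¹ * u j) :=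
      ENNReal.tsum_le_tsum fun n => mul_le_mul_right (bound n i j) _
    have heq : ∑' n : ℕ, z ^ n * ((u i)⁻¹ * u j) = (1 - z)⁻¹ * ((u i)⁻¹ * u j) := by
      rw [ENNReal.tsum_mul_right, ENNReal.tsum_geometric]
    refine ne_top_of_le_ne_top ?_ hsum
    rw [heq]
    exact ENNReal.mul_ne_top (ENNReal.inv_ne_top.2 (tsub_pos_of_lt hz1).ne')
      (ENNReal.mul_ne_top (ENNReal.inv_ne_top.2 (upos i)) (hufin j))
  refine ⟨part1, ?_, ENNReal.inv_le_one.2 hcp⟩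
  exact iInf₂_le γ0⁻¹ (Set.mem_Ioi.2 (inv_pos.2 hγ0))
end
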